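/- Let n ≥ 3, β ≥ (n-2)/(n-1), and u(x) = (R/|x|)^{n-2} on ℝⁿ \ B_R(0). With F, G defined via F(u) = (c u + d) u^{1-(n-1)β/(n-2)}, G(u) = -((n-1)β/((n-2)u)) F(u) + d u^{-(n-1)β/(n-2)}, the vector field Z = F(u) D|Du|^β + G(u) |Du|^β Du satisfies div Z = 0 on ℝⁿ \ \bar{B_R(0)}. -/

import Mathlib

noncomputable section

def stdVec {n : ℕ} (i : Fin n) : EuclideanSpace ℝ (Fin n) := EuclideanSpace.single i 1

/-- The Euclidean divergence of a vector field. -/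
def ediv {n : ℕ} (Z : EuclideanSpace ℝ (Fin n) → EuclideanSpace ℝ (Fin n))
    (x : EuclideanSpace ℝ (Fin n)) : ℝ :=
  ∑ i, fderiv ℝ Z x (stdVec i) i

open Real Filter InnerProductSpace

section aux
variable {E : Type*} [NormedAddCommGroup E] [InnerProductSpace ℝ E] [CompleteSpace E]

lemma myHasFDerivAt_norm_rpow (a : ℝ) {x : E} (hx : x ≠ 0) :
    HasFDerivAt (fun y : E => ‖y‖ ^ a) ((a * ‖x‖ ^ (a - 2)) • (innerSL ℝ x)) x := by
  have hx0 : (0:ℝ) < ‖x‖ := norm_pos_iff.mpr hx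
  have hx2 : (‖x‖ ^ 2 : ℝ) ≠ 0 := by positivity
  have h2 := (hasStrictFDerivAt_norm_sq x).hasFDerivAt.rpow_const (p := a/2) (Or.inl hx2)
  have hfun : (fun y : E => ‖y‖ ^ a) = fun y : E => ((‖y‖ : ℝ) ^ (2:ℕ)) ^ (a/2) := by
    funext y
    rw [← Real.rpow_natCast ‖y‖ 2, ← Real.rpow_mul (norm_nonneg y)]
    congr 1; ring
  have hkey : ((‖x‖ : ℝ) ^ (2:ℕ)) ^ (a/2 - 1) = ‖x‖ ^ (a - 2) := by
    rw [← Real.rpow_natCast ‖x‖ 2, ← Real.rpow_mul (norm_nonneg x)]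
    congr 1; ring
  rw [hfun]
  convert h2 using 1
  ext y
  simp only [ContinuousLinearMap.smul_apply, smul_eq_mul, two_smul,
    ContinuousLinearMap.add_apply]
  rw [hkey]
  ring

lemma hasGradientAt_const_mul_norm_rpow (C a : ℝ) {x : E} (hx : x ≠ 0) :
    HasGradientAt (fun y : E => C * ‖y‖ ^ a) ((C * (a * ‖x‖ ^ (a - 2))) • x) x := by
  have h := (myHasFDerivAt_norm_rpow a hx).const_mul C
  rw [hasGradientAt_iff_hasFDerivAt]
  convert h using 1
  · rfl
  ext y
  simp only [toDual_apply_apply, ContinuousLinearMap.smul_apply, smul_eq_mul,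
    real_inner_smul_left, innerSL_apply_apply]
  ring

end aux

/-- For the radial potential `u(x) = (R/|x|)^{n-2}` and the vector field
`Z = F(u)D|Du|^β + G(u)|Du|^β Du` with `F(t) = (ct+d)t^{1-(n-1)β/(n-2)}`,
`G(t) = -((n-1)β/((n-2)t))F(t) + d t^{-(n-1)β/(n-2)}`, one has `div Z = 0`
outside the closed ball of radius `R`. -/
theorem radial_div_Z_zero {n : ℕ} (hn : 3 ≤ n) (R : ℝ) (hR : 0 < R) (c d : ℝ)
    (β : ℝ) (hβ : ((n : ℝ) - 2) / ((n : ℝ) - 1) ≤ β)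
    (u : EuclideanSpace ℝ (Fin n) → ℝ)
    (hu : ∀ x, u x = R ^ (n - 2) * ‖x‖ ^ (-((n : ℝ) - 2)))
    (F G : ℝ → ℝ)
    (hF : ∀ t, F t = (c * t + d) * t ^ (1 - ((n : ℝ) - 1) * β / ((n : ℝ) - 2)))
    (hG : ∀ t, G t = -(((n : ℝ) - 1) * β / (((n : ℝ) - 2) * t)) * F t +
      d * t ^ (-(((n : ℝ) - 1) * β / ((n : ℝ) - 2))))
    (Z : EuclideanSpace ℝ (Fin n) → EuclideanSpace ℝ (Fin n))
    (hZ : ∀ x, Z x = F (u x) • gradient (fun y => ‖gradient u y‖ ^ β) x +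
      (G (u x) * ‖gradient u x‖ ^ β) • gradient u x) :
    ∀ x : EuclideanSpace ℝ (Fin n), R < ‖x‖ → ediv Z x = 0 := by
  have hν3 : (3:ℝ) ≤ (n:ℝ) := by exact_mod_cast hn
  have hν2 : ((n:ℝ) - 2) ≠ 0 := by linarith
  set a : ℝ := -((n:ℝ) - 2) with ha
  set C : ℝ := R ^ (n - 2) with hCdef
  have hC : 0 < C := pow_pos hR _
  set e : ℝ := ((n:ℝ) - 1) * β / ((n:ℝ) - 2) with he
  set b : ℝ := (a - 1) * β with hb
  set D : ℝ := (C * ((n:ℝ) - 2)) ^ β with hD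
  have hae : a * e = b := by rw [ha, he, hb]; field_simp; ring
  set K : ℝ := C * C ^ (-e) * D * a * d with hK
  have hu' : u = fun y => C * ‖y‖ ^ a := funext hu
  -- gradient of u
  have hgu : ∀ y : EuclideanSpace ℝ (Fin n), y ≠ 0 →
      gradient u y = (C * (a * ‖y‖ ^ (a - 2))) • y := by
    intro y hy
    rw [hu']
    exact (hasGradientAt_const_mul_norm_rpow C a hy).gradient
  -- norm of gradient of u, raised to β
  have hnorm : ∀ y : EuclideanSpace ℝ (Fin n), y ≠ 0 →
      ‖gradient u y‖ ^ β = D * ‖y‖ ^ b := by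
    intro y hy
    have hr : (0:ℝ) < ‖y‖ := norm_pos_iff.mpr hy
    have hp : (0:ℝ) < ‖y‖ ^ (a - 2) := Real.rpow_pos_of_pos hr _
    rw [hgu y hy, norm_smul, Real.norm_eq_abs]
    have ha' : a < 0 := by rw [ha]; linarith
    have habs : |C * (a * ‖y‖ ^ (a - 2))| = C * ((n:ℝ) - 2) * ‖y‖ ^ (a - 2) := by
      rw [abs_of_neg (mul_neg_of_pos_of_neg hC (mul_neg_of_neg_of_pos ha' hp)), ha]
      ring
    rw [habs]
    have h1 : C * ((n:ℝ) - 2) * ‖y‖ ^ (a - 2) * ‖y‖ = (C * ((n:ℝ) - 2)) * ‖y‖ ^ (a - 1) := by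
      nth_rewrite 2 [← Real.rpow_one ‖y‖]
      rw [mul_assoc, ← Real.rpow_add hr]
      congr 2
      ring
    rw [h1, Real.mul_rpow (by nlinarith) (Real.rpow_nonneg (norm_nonneg y) _),
      ← Real.rpow_mul (norm_nonneg y)]
  -- gradient of |grad u|^β
  have hgb : ∀ y : EuclideanSpace ℝ (Fin n), y ≠ 0 →
      gradient (fun z => ‖gradient u z‖ ^ β) y = (D * (b * ‖y‖ ^ (b - 2))) • y := by
    intro y hy
    have heq : (fun z => ‖gradient u z‖ ^ β) =ᶠ[nhds y] (fun z => D * ‖z‖ ^ b) :=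
      Filter.eventuallyEq_of_mem (compl_singleton_mem_nhds hy) (fun z hz => hnorm z hz)
    rw [heq.gradient_eq]
    exact (hasGradientAt_const_mul_norm_rpow D b hy).gradient
  -- Z equals W off the origin
  have hZW : ∀ y : EuclideanSpace ℝ (Fin n), y ≠ 0 →
      Z y = (K * ‖y‖ ^ (a - 2)) • y := by
    intro y hy
    have hr : (0:ℝ) < ‖y‖ := norm_pos_iff.mpr hy
    have ht : (0:ℝ) < u y := by rw [hu y]; positivity
    rw [hZ y, hgb y hy, hnorm y hy, hgu y hy, smul_smul, smul_smul, ← add_smul]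
    congr 1
    -- scalar identity
    have huy : u y = C * ‖y‖ ^ a := hu y
    have hte : (u y) ^ (-e) = C ^ (-e) * (‖y‖ ^ b)⁻¹ := by
      rw [huy, Real.mul_rpow hC.le (Real.rpow_nonneg (norm_nonneg y) _),
        ← Real.rpow_mul (norm_nonneg y), ← Real.rpow_neg (norm_nonneg y) b]
      congr 2
      rw [← hae]; ring
    have ht1e : (u y) ^ (1 - e) = u y * ((u y) ^ (-e)) := by
      rw [show (1:ℝ) - e = 1 + (-e) by ring, Real.rpow_add ht, Real.rpow_one]
    have hcoef : ((n:ℝ) - 1) * β / (((n:ℝ) - 2) * u y) = e / u y := by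
      rw [← div_div, ← he]
    rw [hF (u y), hG (u y), hF (u y), hcoef, ht1e, hte, huy]
    have hQ2 : ‖y‖ ^ (b - 2) = ‖y‖ ^ b * ‖y‖ ^ (-2:ℝ) := by
      rw [← Real.rpow_add hr, sub_eq_add_neg]
    have hP2 : ‖y‖ ^ (a - 2) = ‖y‖ ^ a * ‖y‖ ^ (-2:ℝ) := by
      rw [← Real.rpow_add hr, sub_eq_add_neg]
    rw [hQ2, hP2, hK]
    have hQne : ‖y‖ ^ b ≠ 0 := (Real.rpow_pos_of_pos hr _).ne'
    have htne : C * ‖y‖ ^ a ≠ 0 := by positivity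
    set P := ‖y‖ ^ a
    set Q := ‖y‖ ^ b
    have hPne : P ≠ 0 := (Real.rpow_pos_of_pos hr _).ne'
    rw [← hae]
    field_simp
    ring
  -- conclusion
  intro x hx
  have hx0 : x ≠ 0 := by
    intro h; rw [h, norm_zero] at hx; linarith
  have hr : (0:ℝ) < ‖x‖ := norm_pos_iff.mpr hx0
  have h1 := (myHasFDerivAt_norm_rpow (a - 2) hx0).const_mul K
  have hW := h1.smul (hasFDerivAt_id x)
  have hev : Z =ᶠ[nhds x] (fun y => (K * ‖y‖ ^ (a - 2)) • y) :=
    Filter.eventuallyEq_of_mem (compl_singleton_mem_nhds hx0) (fun y hy => hZW y hy)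
  have hfd : fderiv ℝ Z x = (K * ‖x‖ ^ (a - 2)) • ContinuousLinearMap.id ℝ _ +
      (K • (((a - 2) * ‖x‖ ^ (a - 2 - 2)) • innerSL ℝ x)).smulRight x := by
    rw [hev.fderiv_eq]
    exact hW.fderiv
  rw [ediv]
  simp only [hfd, ContinuousLinearMap.add_apply, ContinuousLinearMap.smul_apply,
    ContinuousLinearMap.coe_id', id_eq, ContinuousLinearMap.smulRight_apply,
    innerSL_apply_apply, PiLp.add_apply, PiLp.smul_apply, smul_eq_mul]
  have hsingle : ∀ i : Fin n, (stdVec i : EuclideanSpace ℝ (Fin n)) i = 1 := by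
    intro i; simp [stdVec, EuclideanSpace.single_apply]
  have hinner : ∀ i : Fin n, (inner ℝ x (stdVec i) : ℝ) = x i := by
    intro i
    simp [stdVec, EuclideanSpace.inner_single_right]
  have hsum : ∑ i, (x i) * (x i) = ‖x‖ ^ (2:ℕ) := by
    rw [EuclideanSpace.norm_eq, Real.sq_sqrt (by positivity)]
    congr 1
    funext i
    rw [Real.norm_eq_abs, sq_abs, sq]
  rw [Finset.sum_congr rfl (fun i _ => by rw [hsingle i, hinner i, mul_one])]
  rw [Finset.sum_add_distrib, Finset.sum_const, Finset.card_univ, Fintype.card_fin]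
  have : ∑ i : Fin n, K * ((a - 2) * ‖x‖ ^ (a - 2 - 2) * x i) * x i
      = K * (a - 2) * ‖x‖ ^ (a - 2 - 2) * ∑ i, (x i) * (x i) := by
    rw [Finset.mul_sum]; congr 1; funext i; ring
  rw [this, hsum]
  have hpow : ‖x‖ ^ (a - 2 - 2) * ‖x‖ ^ (2:ℕ) = ‖x‖ ^ (a - 2) := by
    rw [← Real.rpow_natCast ‖x‖ 2, ← Real.rpow_add hr]
    congr 1; push_cast; ring
  rw [mul_assoc (K * (a-2)), hpow]
  rw [ha]
  ring
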